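/- In the exploded graph, every walk from a virtual copy of s to a virtual copy of t that uses at most m virtual edges corresponds to a physical s–t path with at most m elbows; consequently, minimizing path cost with elbow penalty β over the exploded graph with β → ∞ yields, in the limit, a physical path with the minimum possible number of elbows among all s–t paths. -/

import Mathlib

open scoped Classical

inductive Dir | X | Y | Z
deriving DecidableEq

def EAdj {V0 : Type} (E0 : V0 → V0 → Prop) (dir : V0 → V0 → Dir) :
    V0 × Dir → V0 × Dir → Prop :=
  fun a b => (a.1 = b.1 ∧ a.2 ≠ b.2) ∨ (E0 a.1 b.1 ∧ a.2 = b.2 ∧ dir a.1 b.1 = a.2)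

def steps {α : Type*} (w : List α) : List (α × α) := w.zip w.tail

noncomputable def ecost {V0 : Type} (pos : V0 → EuclideanSpace ℝ (Fin 3)) (β : ℝ)
    (w : List (V0 × Dir)) : ℝ :=
  ((steps w).map (fun q => if q.1.1 = q.2.1 then β else dist (pos q.1.1) (pos q.2.1))).sum

/-- Number of elbows (direction changes) of a physical path. -/
def elbows {V0 : Type} (dir : V0 → V0 → Dir) (p : List V0) : ℕ :=
  (steps (steps p)).countP fun q => decide (dir q.1.1 q.1.2 ≠ dir q.2.1 q.2.2)

def IsPhysPath {V0 : Type} (E0 : V0 → V0 → Prop) (s t : V0) (p : List V0) : Prop :=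
  p ≠ [] ∧ p.Chain' E0 ∧ p.head? = some s ∧ p.getLast? = some t ∧ p.Nodup

def IsEPath {V0 : Type} (E0 : V0 → V0 → Prop) (dir : V0 → V0 → Dir) (s t : V0)
    (w : List (V0 × Dir)) : Prop :=
  w ≠ [] ∧ w.Chain' (EAdj E0 dir) ∧ w.Nodup ∧
  (w.map Prod.fst).head? = some s ∧ (w.map Prod.fst).getLast? = some t ∧
  ∀ q ∈ steps (steps w), ¬ (q.1.1.1 = q.1.2.1 ∧ q.2.1.1 = q.2.2.1)




section generic
variable {α β : Type*}

@[simp] lemma steps_nil : steps ([] : List α) = [] := rfl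
@[simp] lemma steps_single (a : α) : steps [a] = [] := rfl
@[simp] lemma steps_cons_cons (a b : α) (l : List α) :
    steps (a :: b :: l) = (a, b) :: steps (b :: l) := rfl

lemma steps_map (f : α → β) (l : List α) :
    steps (l.map f) = (steps l).map (Prod.map f f) := by
  induction l with
  | nil => rfl
  | cons a l ih =>
    cases l with
    | nil => rfl
    | cons b l =>
      simp only [List.map_cons, steps_cons_cons] at *
      simp [ih]

lemma chain'_iff_steps {R : α → α → Prop} (l : List α) :
    l.Chain' R ↔ ∀ q ∈ steps l, R q.1 q.2 := by
  induction l with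
  | nil => simp [List.Chain']
  | cons a l ih =>
    cases l with
    | nil => simp [List.Chain']
    | cons b l =>
      simp only [List.Chain'] at ih ⊢; rw [List.isChain_cons_cons, steps_cons_cons]
      simp only [List.mem_cons, forall_eq_or_imp]
      rw [ih]

lemma steps_append (A : List α) (x : α) (l : List α) :
    steps (A ++ x :: l) = steps (A ++ [x]) ++ steps (x :: l) := by
  induction A with
  | nil => simp
  | cons a A ih =>
    cases A with
    | nil => simp
    | cons a' A' =>
      simp only [List.cons_append, steps_cons_cons] at *
      simp [ih]

lemma chain'_steps_pair {R : α → α → Prop} {l : List α} (h : l.Chain' R) :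
    (steps l).Chain' (fun e f => R e.1 e.2 ∧ R f.1 f.2 ∧ e.2 = f.1) := by
  induction l with
  | nil => simp [List.Chain']
  | cons a l ih =>
    cases l with
    | nil => simp [List.Chain']
    | cons b l =>
      simp only [List.Chain'] at h; rw [List.isChain_cons_cons] at h
      have ih' := ih h.2
      rw [steps_cons_cons]
      cases l with
      | nil => simp [List.Chain']
      | cons c l =>
        simp only [steps_cons_cons] at ih' ⊢
        exact List.isChain_cons_cons.2 ⟨⟨h.1, (List.isChain_cons_cons.1 h.2).1, rfl⟩, ih'⟩

lemma head?_steps (a : α) (l : List α) :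
    ((steps (a :: l)).map Prod.fst).head? = if l = [] then none else some a := by
  cases l <;> simp

end generic

/-! ### counting changes in a list of directions -/

def changes (l : List Dir) : ℕ := (steps l).countP (fun q => decide (q.1 ≠ q.2))

@[simp] lemma changes_nil : changes [] = 0 := rfl
@[simp] lemma changes_single (a : Dir) : changes [a] = 0 := rfl

lemma changes_cons_cons (a b : Dir) (l : List Dir) :
    changes (a :: b :: l) = changes (b :: l) + (if a = b then 0 else 1) := by
  by_cases h : a = b <;> simp [changes, List.countP_cons, h]

lemma changes_le_cons (a : Dir) (l : List Dir) : changes l ≤ changes (a :: l) := by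
  cases l with
  | nil => simp
  | cons b l => rw [changes_cons_cons]; exact Nat.le_add_right _ _

lemma changes_cons_le (a : Dir) (l : List Dir) : changes (a :: l) ≤ changes l + 1 := by
  cases l with
  | nil => simp
  | cons b l =>
    rw [changes_cons_cons]
    exact Nat.add_le_add_left (by split <;> omega) _

lemma changes_cons_head (a : Dir) (l : List Dir) (h : l.head? = some a) :
    changes (a :: l) = changes l := by
  cases l with
  | nil => simp at h
  | cons b l =>
    simp only [List.head?_cons, Option.some.injEq] at h
    rw [changes_cons_cons, if_pos h.symm]; omega

lemma changes_cons_append (Y : List Dir) : ∀ (x : Dir) (Z : List Dir),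
    changes (x :: Z) ≤ changes (x :: (Y ++ Z)) := by
  induction Y with
  | nil => intro x Z; simp
  | cons y Y' ih =>
    intro x Z
    have h2 : changes (y :: Z) ≤ changes (y :: (Y' ++ Z)) := ih y Z
    by_cases h : x = y
    · subst h
      calc changes (x :: Z) ≤ changes (x :: (Y' ++ Z)) := ih x Z
        _ ≤ _ := by rw [List.cons_append, changes_cons_cons]; exact Nat.le_add_right _ _
    · calc changes (x :: Z) ≤ changes Z + 1 := changes_cons_le _ _
        _ ≤ changes (y :: Z) + 1 := Nat.add_le_add_right (changes_le_cons _ _) 1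
        _ ≤ changes (y :: (Y' ++ Z)) + 1 := Nat.add_le_add_right h2 1
        _ = _ := by rw [List.cons_append, changes_cons_cons, if_neg h]

lemma opt_changes_le : ∀ (L : List (Option Dir)),
    L.Chain' (fun a b => ∀ d1 d2 : Dir, a = some d1 → b = some d2 → d1 = d2) →
    changes L.reduceOption ≤ L.count none := by
  have key : ∀ (n : ℕ) (L : List (Option Dir)), L.length ≤ n →
      L.Chain' (fun a b => ∀ d1 d2 : Dir, a = some d1 → b = some d2 → d1 = d2) →
      changes L.reduceOption ≤ L.count none := by
    intro n
    induction n with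
    | zero => intro L hL _; cases L with | nil => simp | cons a L => simp at hL
    | succ n ih =>
      intro L hL hc
      match L with
      | [] => simp
      | none :: L' =>
        simp only [List.reduceOption_cons_of_none, List.count_cons_self]
        exact le_trans (ih L' (by simpa using Nat.le_of_succ_le_succ hL) hc.tail)
          (Nat.le_succ _)
      | [some d] => simp [changes]
      | some d :: none :: L'' =>
        have h1 : changes (some d :: none :: L'' : List (Option Dir)).reduceOption
            ≤ changes L''.reduceOption + 1 := by
          simp only [List.reduceOption_cons_of_some, List.reduceOption_cons_of_none]
          exact changes_cons_le _ _
        have h2 := ih L'' (by simp at hL; omega) (hc.tail.tail)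
        have h3 : (some d :: none :: L'' : List (Option Dir)).count none
            = L''.count none + 1 := by
          simp [List.count_cons]
        omega
      | some d :: some d' :: L'' =>
        have hdd : d = d' := (List.isChain_cons_cons.1 hc).1 d d' rfl rfl
        have h2 := ih (some d' :: L'') (by simpa using Nat.le_of_succ_le_succ hL) hc.tail
        simp only [List.reduceOption_cons_of_some] at h2 ⊢
        rw [changes_cons_cons, if_pos hdd]
        simpa [List.count_cons] using h2
  intro L hc
  exact key L.length L le_rfl hc

/-! ### projection of an exploded walk to a physical walk -/



section proj
variable {V0 : Type} [DecidableEq V0] {E0 : V0 → V0 → Prop} {dir : V0 → V0 → Dir}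

def dirs (dir : V0 → V0 → Dir) (p : List V0) : List Dir :=
  (steps p).map (fun q => dir q.1 q.2)

lemma elbows_eq_changes (dir : V0 → V0 → Dir) (p : List V0) :
    elbows dir p = changes (dirs dir p) := by
  rw [elbows, changes, dirs, steps_map, List.countP_map]
  rfl

def proj : List (V0 × Dir) → List V0
  | [] => []
  | [a] => [a.1]
  | a :: b :: l => if a.1 = b.1 then proj (b :: l) else a.1 :: proj (b :: l)

lemma proj_cons_cons (a b : V0 × Dir) (l : List (V0 × Dir)) :
    proj (a :: b :: l) = if a.1 = b.1 then proj (b :: l) else a.1 :: proj (b :: l) := by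
  rfl

lemma head?_proj : ∀ (l : List (V0 × Dir)) (a : V0 × Dir),
    (proj (a :: l)).head? = some a.1 := by
  intro l
  induction l with
  | nil => intro a; rfl
  | cons b l ih =>
    intro a
    rw [proj_cons_cons]
    by_cases h : a.1 = b.1
    · rw [if_pos h, ih b, h]
    · rw [if_neg h]; rfl

lemma proj_ne_nil (l : List (V0 × Dir)) (a : V0 × Dir) : proj (a :: l) ≠ [] := by
  intro h
  have := head?_proj l a
  rw [h] at this
  simp at this

lemma getLast?_cons_of_ne_nil {α : Type*} (x : α) {M : List α} (h : M ≠ []) :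
    (x :: M).getLast? = M.getLast? := by
  cases M with
  | nil => exact absurd rfl h
  | cons b M => rw [List.getLast?_cons_cons]

lemma getLast?_proj : ∀ (l : List (V0 × Dir)) (a : V0 × Dir),
    (proj (a :: l)).getLast? = ((a :: l).getLast?).map Prod.fst := by
  intro l
  induction l with
  | nil => intro a; rfl
  | cons b l ih =>
    intro a
    rw [proj_cons_cons]
    have h2 : ((a :: b :: l).getLast?).map Prod.fst = ((b :: l).getLast?).map Prod.fst := by
      rw [List.getLast?_cons_cons]
    by_cases h : a.1 = b.1
    · rw [if_pos h, ih b, h2]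
    · rw [if_neg h, getLast?_cons_of_ne_nil _ (proj_ne_nil l b), ih b, h2]

lemma steps_proj : ∀ (l : List (V0 × Dir)),
    steps (proj l) = (steps l).filterMap
      (fun q => if q.1.1 = q.2.1 then none else some (q.1.1, q.2.1)) := by
  intro l
  match l with
  | [] => rfl
  | [a] => rfl
  | a :: b :: l =>
    by_cases h : a.1 = b.1
    · rw [proj_cons_cons, if_pos h, steps_proj (b :: l), steps_cons_cons, List.filterMap_cons]
      simp [h]
    · rw [proj_cons_cons, if_neg h]
      obtain ⟨tl, htl⟩ : ∃ tl, proj (b :: l) = b.1 :: tl := by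
        have := head?_proj l b
        cases hp : proj (b :: l) with
        | nil => rw [hp] at this; simp at this
        | cons c tl => rw [hp] at this; simp at this; exact ⟨tl, by rw [this]⟩
      rw [htl, steps_cons_cons, ← htl, steps_proj (b :: l), steps_cons_cons,
        List.filterMap_cons]
      simp [h]

lemma chain'_proj {w : List (V0 × Dir)} (hc : w.Chain' (EAdj E0 dir)) :
    (proj w).Chain' E0 := by
  rw [chain'_iff_steps]
  intro q hq
  rw [steps_proj] at hq
  obtain ⟨q', hq', heq⟩ := List.mem_filterMap.1 hq
  by_cases h : q'.1.1 = q'.2.1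
  · simp [h] at heq
  · simp only [if_neg h, Option.some.injEq] at heq
    have hadj := (chain'_iff_steps w).1 hc q' hq'
    rcases hadj with ⟨h1, _⟩ | ⟨h1, _, _⟩
    · exact absurd h1 h
    · rw [← heq]; exact h1

lemma dirs_proj {w : List (V0 × Dir)} (hc : w.Chain' (EAdj E0 dir)) :
    dirs dir (proj w) =
      ((steps w).map (fun q => if q.1.1 = q.2.1 then none else some q.1.2)).reduceOption := by
  rw [dirs, steps_proj, List.map_filterMap, List.reduceOption, List.filterMap_map]
  apply List.filterMap_congr
  intro q hq
  by_cases h : q.1.1 = q.2.1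
  · simp [h]
  · have hadj := (chain'_iff_steps w).1 hc q hq
    rcases hadj with ⟨h1, _⟩ | ⟨_, _, h3⟩
    · exact absurd h1 h
    · simp [h, Function.comp, h3]

lemma changes_proj_le {w : List (V0 × Dir)} (hc : w.Chain' (EAdj E0 dir)) :
    changes (dirs dir (proj w)) ≤ (steps w).countP (fun q => decide (q.1.1 = q.2.1)) := by
  rw [dirs_proj hc]
  set G : (V0 × Dir) × (V0 × Dir) → Option Dir :=
    fun q => if q.1.1 = q.2.1 then none else some q.1.2 with hG
  have hcount : ((steps w).map G).count none
      = (steps w).countP (fun q => decide (q.1.1 = q.2.1)) := by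
    rw [List.count, List.countP_map]
    apply List.countP_congr
    intro q _
    by_cases h : q.1.1 = q.2.1 <;> simp [hG, h, Function.comp]
  rw [← hcount]
  apply opt_changes_le
  simp only [List.Chain']; rw [List.isChain_map]
  apply List.IsChain.imp _ (chain'_steps_pair hc)
  rintro e f ⟨he, hf, hef⟩ d1 d2 h1 h2
  by_cases h : e.1.1 = e.2.1
  · simp [hG, h] at h1
  · by_cases h' : f.1.1 = f.2.1
    · simp [hG, h'] at h2
    · simp only [hG, if_neg h, if_neg h', Option.some.injEq] at h1 h2
      rcases he with ⟨he1, _⟩ | ⟨_, he2, _⟩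
      · exact absurd he1 h
      · rcases hf with ⟨hf1, _⟩ | ⟨_, _, _⟩
        · exact absurd hf1 h'
        · rw [← h1, ← h2, ← hef, he2]

end proj

/-! ### loop erasure -/

section erase
variable {V0 : Type} [DecidableEq V0] {E0 : V0 → V0 → Prop} {dir : V0 → V0 → Dir}

lemma dirs_cons_cons (dir : V0 → V0 → Dir) (u v : V0) (l : List V0) :
    dirs dir (u :: v :: l) = dir u v :: dirs dir (v :: l) := rfl

lemma dirs_append (dir : V0 → V0 → Dir) (A : List V0) (x : V0) (l : List V0) :
    dirs dir (A ++ x :: l) = dirs dir (A ++ [x]) ++ dirs dir (x :: l) := by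
  rw [dirs, steps_append, List.map_append]; rfl

lemma erase_loops (dir : V0 → V0 → Dir) : ∀ (n : ℕ) (p : List V0), p.length ≤ n →
    p ≠ [] → p.Chain' E0 →
    ∃ q : List V0, q ≠ [] ∧ q.Chain' E0 ∧ q.head? = p.head? ∧ q.getLast? = p.getLast? ∧
      q.Nodup ∧ (∀ x ∈ q, x ∈ p) ∧
      (∀ d : Dir, changes (d :: dirs dir q) ≤ changes (d :: dirs dir p)) := by
  intro n
  induction n with
  | zero => intro p hL hne _; cases p with
    | nil => exact absurd rfl hne
    | cons a l => simp at hL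
  | succ n ih =>
    rintro p hL hne hc
    match p, hne with
    | [v], _ =>
      exact ⟨[v], by simp, by simp [List.Chain'], rfl, rfl, by simp, by simp, fun d => le_rfl⟩
    | v :: r :: rest', _ =>
      by_cases hv : v ∈ r :: rest'
      · obtain ⟨b, c, hbc⟩ := List.append_of_mem hv
        have hp : v :: r :: rest' = (v :: b) ++ (v :: c) := by rw [hbc]; simp
        have hsuf : (v :: c) <:+ (v :: r :: rest') := ⟨v :: b, hp.symm⟩
        have hcvc : (v :: c).Chain' E0 := hc.suffix hsuf
        have hlen : (v :: c).length ≤ n := by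
          have := congrArg List.length hp
          simp only [List.length_cons, List.length_append] at this hL ⊢
          omega
        obtain ⟨q, hq1, hq2, hq3, hq4, hq5, hq6, hq7⟩ :=
          ih (v :: c) hlen (by simp) hcvc
        refine ⟨q, hq1, hq2, ?_, ?_, hq5, ?_, ?_⟩
        · rw [hq3]; rfl
        · rw [hq4, hp, List.getLast?_append_of_ne_nil _ (by simp)]
        · intro x hx
          exact hp ▸ (List.mem_append.2 (Or.inr (hq6 x hx)))
        · intro d
          refine le_trans (hq7 d) ?_
          have hdecomp : dirs dir (v :: r :: rest')
              = dirs dir ((v :: b) ++ [v]) ++ dirs dir (v :: c) := by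
            rw [hp]; exact dirs_append dir (v :: b) v c
          rw [hdecomp]
          exact changes_cons_append _ d _
      · have hlen : (r :: rest').length ≤ n := by
          simp only [List.length_cons] at hL ⊢; omega
        obtain ⟨q, hq1, hq2, hq3, hq4, hq5, hq6, hq7⟩ :=
          ih (r :: rest') hlen (by simp) (List.isChain_cons.1 hc).2
        obtain ⟨qt, hqt⟩ : ∃ qt, q = r :: qt := by
          cases q with
          | nil => exact absurd rfl hq1
          | cons a qt =>
            simp only [List.head?_cons, Option.some.injEq] at hq3
            exact ⟨qt, by rw [hq3]⟩
        refine ⟨v :: q, by simp, ?_, by simp, ?_, ?_, ?_, ?_⟩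
        · refine List.isChain_cons.2 ⟨?_, hq2⟩
          intro y hy
          rw [hq3] at hy
          simp at hy
          subst hy
          exact (List.isChain_cons_cons.1 hc).1
        · rw [getLast?_cons_of_ne_nil _ hq1, hq4]
          exact (getLast?_cons_of_ne_nil v (by simp : (r :: rest' : List V0) ≠ [])).symm
        · exact List.nodup_cons.2 ⟨fun hmem => hv (hq6 v hmem), hq5⟩
        · intro x hx
          rcases List.mem_cons.1 hx with h | h
          · simp [h]
          · exact List.mem_cons_of_mem _ (hq6 x h)
        · intro d
          rw [hqt, dirs_cons_cons, dirs_cons_cons, changes_cons_cons, changes_cons_cons]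
          have := hq7 (dir v r)
          rw [hqt] at this
          omega

lemma erase_loops' (dir : V0 → V0 → Dir) (p : List V0) (hne : p ≠ []) (hc : p.Chain' E0) :
    ∃ q : List V0, q ≠ [] ∧ q.Chain' E0 ∧ q.head? = p.head? ∧ q.getLast? = p.getLast? ∧
      q.Nodup ∧ changes (dirs dir q) ≤ changes (dirs dir p) := by
  obtain ⟨q, h1, h2, h3, h4, h5, _, h7⟩ := erase_loops (E0 := E0) dir p.length p le_rfl hne hc
  refine ⟨q, h1, h2, h3, h4, h5, ?_⟩
  cases hdp : dirs dir p with
  | nil =>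
    have := h7 Dir.X
    rw [hdp] at this
    simp only [changes_single] at this
    have h0 : changes (dirs dir q) ≤ changes (Dir.X :: dirs dir q) := changes_le_cons _ _
    omega
  | cons d rest =>
    have := h7 d
    rw [hdp, changes_cons_head d (d :: rest) (by simp)] at this
    exact le_trans (changes_le_cons _ _) this

end erase

/-! ### lifting a physical path to an exploded path -/

section lift
variable {V0 : Type} [DecidableEq V0] {E0 : V0 → V0 → Prop}

def liftAux (dir : V0 → V0 → Dir) : Dir → List V0 → List (V0 × Dir)
  | _, [] => []
  | d, [v] => [(v, d)]
  | d, u :: v :: l =>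
    (if dir u v = d then [(u, d)] else [(u, d), (u, dir u v)]) ++ liftAux dir (dir u v) (v :: l)

lemma liftAux_cons_cons (dir : V0 → V0 → Dir) (d : Dir) (u v : V0) (l : List V0) :
    liftAux dir d (u :: v :: l) =
    (if dir u v = d then [(u, d)] else [(u, d), (u, dir u v)])
      ++ liftAux dir (dir u v) (v :: l) := rfl

lemma head?_liftAux (dir : V0 → V0 → Dir) (d : Dir) (u : V0) (l : List V0) :
    (liftAux dir d (u :: l)).head? = some (u, d) := by
  cases l with
  | nil => rfl
  | cons v l =>
    rw [liftAux_cons_cons]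
    by_cases h : dir u v = d <;> simp [h]

lemma liftAux_ne_nil (dir : V0 → V0 → Dir) (d : Dir) (u : V0) (l : List V0) :
    liftAux dir d (u :: l) ≠ [] := by
  intro h
  have := head?_liftAux dir d u l
  rw [h] at this
  simp at this

lemma exists_cons_liftAux (dir : V0 → V0 → Dir) (d : Dir) (u : V0) (l : List V0) :
    ∃ tl, liftAux dir d (u :: l) = (u, d) :: tl := by
  have h := head?_liftAux dir d u l
  cases hl : liftAux dir d (u :: l) with
  | nil => rw [hl] at h; simp at h
  | cons a tl =>
    rw [hl] at h
    simp only [List.head?_cons, Option.some.injEq] at h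
    exact ⟨tl, by rw [h]⟩

lemma mem_liftAux (dir : V0 → V0 → Dir) :
    ∀ (p : List V0) (d : Dir) (x : V0 × Dir), x ∈ liftAux dir d p → x.1 ∈ p := by
  intro p
  match p with
  | [] => intro d x hx; simp [liftAux] at hx
  | [v] => intro d x hx; simp [liftAux] at hx; simp [hx]
  | u :: v :: l =>
    intro d x hx
    rw [liftAux_cons_cons] at hx
    rcases List.mem_append.1 hx with h | h
    · have h1 : x.1 = u := by
        by_cases hc : dir u v = d
        · rw [if_pos hc] at h
          rw [List.eq_of_mem_singleton h]
        · rw [if_neg hc] at h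
          rcases List.mem_cons.1 h with h | h
          · rw [h]
          · rw [List.eq_of_mem_singleton h]
      simp [h1]
    · exact List.mem_cons_of_mem _ (mem_liftAux dir (v :: l) (dir u v) x h)

lemma map_fst_getLast?_liftAux (dir : V0 → V0 → Dir) :
    ∀ (p : List V0) (d : Dir), ((liftAux dir d p).map Prod.fst).getLast? = p.getLast? := by
  intro p
  match p with
  | [] => intro d; rfl
  | [v] => intro d; rfl
  | u :: v :: l =>
    intro d
    rw [liftAux_cons_cons, List.map_append,
      List.getLast?_append_of_ne_nil _
        (by simp [liftAux_ne_nil dir (dir u v) v l]),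
      map_fst_getLast?_liftAux dir (v :: l) (dir u v)]
    exact (getLast?_cons_of_ne_nil u (by simp)).symm

lemma chain'_liftAux (dir : V0 → V0 → Dir) :
    ∀ (p : List V0) (d : Dir), p.Chain' E0 → (liftAux dir d p).Chain' (EAdj E0 dir) := by
  intro p
  match p with
  | [] => intro d _; simp [liftAux, List.Chain']
  | [v] => intro d _; simp [liftAux, List.Chain']
  | u :: v :: l =>
    intro d hc
    obtain ⟨tl, htl⟩ := exists_cons_liftAux dir (dir u v) v l
    have hE : E0 u v := (List.isChain_cons_cons.1 hc).1
    have ih := chain'_liftAux dir (v :: l) (dir u v) (List.isChain_cons_cons.1 hc).2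
    rw [liftAux_cons_cons]
    by_cases h : dir u v = d
    · rw [if_pos h, List.singleton_append, htl]
      exact List.isChain_cons_cons.2 ⟨Or.inr ⟨hE, h.symm, h⟩, htl ▸ ih⟩
    · rw [if_neg h, htl]
      refine List.isChain_cons_cons.2 ⟨Or.inl ⟨rfl, fun hdd => h hdd.symm⟩, ?_⟩
      exact List.isChain_cons_cons.2 ⟨Or.inr ⟨hE, rfl, rfl⟩, htl ▸ ih⟩

lemma nodup_liftAux (dir : V0 → V0 → Dir) :
    ∀ (p : List V0) (d : Dir), p.Nodup → (liftAux dir d p).Nodup := by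
  intro p
  match p with
  | [] => intro d _; simp [liftAux]
  | [v] => intro d _; simp [liftAux]
  | u :: v :: l =>
    intro d hnd
    rw [liftAux_cons_cons]
    have hu : u ∉ (v :: l) := (List.nodup_cons.1 hnd).1
    have ih := nodup_liftAux dir (v :: l) (dir u v) (List.nodup_cons.1 hnd).2
    refine List.Nodup.append ?_ ih ?_
    · by_cases h : dir u v = d
      · simp [h]
      · simp [h, Prod.ext_iff]
        exact fun hdd => h hdd.symm
    · intro x hx hx'
      have h1 : x.1 = u := by
        by_cases hc : dir u v = d
        · rw [if_pos hc] at hx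
          rw [List.eq_of_mem_singleton hx]
        · rw [if_neg hc] at hx
          rcases List.mem_cons.1 hx with hx | hx
          · rw [hx]
          · rw [List.eq_of_mem_singleton hx]
      exact hu (h1 ▸ mem_liftAux dir (v :: l) (dir u v) x hx')

end lift

section lift2
variable {V0 : Type} [DecidableEq V0] {E0 : V0 → V0 → Prop}

lemma steps_chain_liftAux (dir : V0 → V0 → Dir) (hirr : ∀ u v, E0 u v → u ≠ v) :
    ∀ (p : List V0) (d : Dir), p.Chain' E0 →
    (steps (liftAux dir d p)).Chain'
      (fun e f => ¬ ((e.1.1 : V0) = e.2.1 ∧ (f.1.1 : V0) = f.2.1)) := by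
  intro p
  match p with
  | [] => intro d _; simp [liftAux, List.Chain']
  | [v] => intro d _; simp [liftAux, List.Chain']
  | u :: v :: l =>
    intro d hc
    obtain ⟨tl, htl⟩ := exists_cons_liftAux dir (dir u v) v l
    have hE : E0 u v := (List.isChain_cons_cons.1 hc).1
    have hne : u ≠ v := hirr u v hE
    have ih := steps_chain_liftAux dir hirr (v :: l) (dir u v) (List.isChain_cons_cons.1 hc).2
    rw [liftAux_cons_cons]
    by_cases h : dir u v = d
    · rw [if_pos h, List.singleton_append, htl, steps_cons_cons]
      refine List.isChain_cons.2 ⟨?_, htl ▸ ih⟩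
      rintro y _ ⟨h1, _⟩
      exact hne h1
    · rw [if_neg h, htl]
      show (steps ((u, d) :: (u, dir u v) :: (v, dir u v) :: tl)).Chain' _
      rw [steps_cons_cons, steps_cons_cons]
      refine List.isChain_cons_cons.2 ⟨?_, ?_⟩
      · rintro ⟨_, h2⟩
        exact hne h2
      · refine List.isChain_cons.2 ⟨?_, ?_⟩
        · rintro y _ ⟨h1, _⟩
          exact hne h1
        · rw [htl] at ih; exact ih
      
lemma countP_liftAux (dir : V0 → V0 → Dir) (hirr : ∀ u v, E0 u v → u ≠ v) :
    ∀ (p : List V0) (d : Dir), p.Chain' E0 →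
    (steps (liftAux dir d p)).countP (fun q => decide ((q.1.1 : V0) = q.2.1))
      = changes (d :: dirs dir p) := by
  intro p
  match p with
  | [] => intro d _; simp [liftAux, dirs]
  | [v] => intro d _; simp [liftAux, dirs]
  | u :: v :: l =>
    intro d hc
    obtain ⟨tl, htl⟩ := exists_cons_liftAux dir (dir u v) v l
    have hE : E0 u v := (List.isChain_cons_cons.1 hc).1
    have hne : u ≠ v := hirr u v hE
    have ih := countP_liftAux dir hirr (v :: l) (dir u v) (List.isChain_cons_cons.1 hc).2
    rw [liftAux_cons_cons, dirs_cons_cons, changes_cons_cons]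
    by_cases h : dir u v = d
    · rw [if_pos h, List.singleton_append, htl, steps_cons_cons, List.countP_cons]
      rw [htl] at ih
      simp only [decide_eq_true_eq]
      rw [if_neg (by exact hne), if_pos (by rw [h])]
      omega
    · rw [if_neg h, htl]
      show ((steps ((u, d) :: (u, dir u v) :: (v, dir u v) :: tl)).countP _) = _
      rw [steps_cons_cons, steps_cons_cons, List.countP_cons, List.countP_cons]
      rw [htl] at ih
      simp only [decide_eq_true_eq]
      rw [if_neg (by exact hne), if_neg (fun hh : d = dir u v => h hh.symm)]
      simp only [if_true]
      omega

end lift2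




section assemble
variable {V0 : Type} [DecidableEq V0] {E0 : V0 → V0 → Prop}

/-- From any exploded walk, a physical simple path with at most as many elbows as
the walk has virtual edges. -/
lemma phys_from_walk (dir : V0 → V0 → Dir) {s t : V0} (w : List (V0 × Dir))
    (hne : w ≠ []) (hch : w.Chain' (EAdj E0 dir))
    (hh : (w.map Prod.fst).head? = some s) (hl : (w.map Prod.fst).getLast? = some t) :
    ∃ p : List V0, IsPhysPath E0 s t p ∧
      elbows dir p ≤ (steps w).countP (fun q => decide (q.1.1 = q.2.1)) := by
  match w, hne with
  | a :: l, _ =>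
    have hh' : a.1 = s := by
      rw [List.head?_map] at hh
      simpa using hh
    have hproj_last : (proj (a :: l)).getLast? = some t := by
      rw [getLast?_proj, ← List.getLast?_map (f := Prod.fst) (l := a :: l)]
      exact hl
    obtain ⟨q, hq1, hq2, hq3, hq4, hq5, hq6⟩ :=
      erase_loops' (E0 := E0) dir (proj (a :: l)) (proj_ne_nil l a) (chain'_proj hch)
    refine ⟨q, ⟨hq1, hq2, ?_, ?_, hq5⟩, ?_⟩
    · rw [hq3, head?_proj, hh']
    · rw [hq4, hproj_last]
    · rw [elbows_eq_changes]
      calc changes (dirs dir q) ≤ changes (dirs dir (proj (a :: l))) := hq6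
        _ ≤ _ := changes_proj_le hch

def lift (dir : V0 → V0 → Dir) : List V0 → List (V0 × Dir)
  | [] => []
  | [v] => [(v, Dir.X)]
  | u :: v :: l => liftAux dir (dir u v) (u :: v :: l)

lemma lift_spec (dir : V0 → V0 → Dir) (hirr : ∀ u v, E0 u v → u ≠ v) {s t : V0}
    {p : List V0} (hp : IsPhysPath E0 s t p) :
    IsEPath E0 dir s t (lift dir p) ∧
    (steps (lift dir p)).countP (fun q => decide (q.1.1 = q.2.1)) = elbows dir p := by
  obtain ⟨hne, hch, hh, hl, hnd⟩ := hp
  match p, hne with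
  | [v], _ =>
    have hs : v = s := by simpa using hh
    have ht : v = t := by simpa using hl
    subst hs
    refine ⟨⟨by simp [lift], by simp [lift, List.Chain'], by simp [lift], by simp [lift], ?_, ?_⟩, ?_⟩
    · simp [lift]; simpa using ht
    · intro q hq; simp [lift, steps] at hq
    · simp [lift, steps, elbows]
  | u :: v :: l, _ =>
    have hs : u = s := by simpa using hh
    have hw : lift dir (u :: v :: l) = liftAux dir (dir u v) (u :: v :: l) := rfl
    obtain ⟨tl, htl⟩ := exists_cons_liftAux dir (dir u v) u (v :: l)
    refine ⟨⟨?_, ?_, ?_, ?_, ?_, ?_⟩, ?_⟩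
    · rw [hw]; exact liftAux_ne_nil dir _ u (v :: l)
    · rw [hw]; exact chain'_liftAux dir _ _ hch
    · rw [hw]; exact nodup_liftAux dir _ _ hnd
    · rw [hw, List.head?_map, htl]; simp [hs]
    · rw [hw, map_fst_getLast?_liftAux]; exact hl
    · intro q hq
      rw [hw] at hq
      exact (chain'_iff_steps _).1 (steps_chain_liftAux dir hirr _ _ hch) q hq
    · rw [hw, countP_liftAux dir hirr _ _ hch, elbows_eq_changes, dirs_cons_cons,
        changes_cons_head _ _ (by simp)]

lemma ecost_split (pos : V0 → EuclideanSpace ℝ (Fin 3)) (β : ℝ) (w : List (V0 × Dir)) :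
    ecost pos β w = ecost pos 0 w
      + β * ((steps w).countP (fun q => decide (q.1.1 = q.2.1)) : ℕ) := by
  rw [ecost, ecost]
  induction steps w with
  | nil => simp
  | cons q S ih =>
    rw [List.map_cons, List.map_cons, List.sum_cons, List.sum_cons, List.countP_cons, ih]
    by_cases h : q.1.1 = q.2.1 <;> simp [h] <;> push_cast <;> ring

lemma ecost_zero_nonneg (pos : V0 → EuclideanSpace ℝ (Fin 3)) (w : List (V0 × Dir)) :
    0 ≤ ecost pos 0 w := by
  apply List.sum_nonneg
  intro x hx
  rw [List.mem_map] at hx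
  obtain ⟨q, _, rfl⟩ := hx
  by_cases h : q.1.1 = q.2.1 <;> simp [h, dist_nonneg]

end assemble


/-- Every walk in the exploded graph from a copy of `s` to a copy of `t` using at most `m`
virtual edges yields a physical `s`–`t` path with at most `m` elbows; and for all large
enough elbow penalties `β`, any cost-minimal exploded path uses the minimum possible number
of elbows among all physical `s`–`t` paths. -/
theorem stmt17 {V0 : Type} [DecidableEq V0] [Fintype V0]
    (E0 : V0 → V0 → Prop) (dir : V0 → V0 → Dir) (pos : V0 → EuclideanSpace ℝ (Fin 3))
    (hirr : ∀ u v, E0 u v → u ≠ v) (s t : V0)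
    (hconn : ∃ p, IsPhysPath E0 s t p) :
    (∀ (m : ℕ) (w : List (V0 × Dir)),
      w ≠ [] → w.Chain' (EAdj E0 dir) →
      (w.map Prod.fst).head? = some s → (w.map Prod.fst).getLast? = some t →
      (steps w).countP (fun q => decide (q.1.1 = q.2.1)) ≤ m →
      ∃ p : List V0, p ≠ [] ∧ p.Chain' E0 ∧ p.head? = some s ∧ p.getLast? = some t ∧
        elbows dir p ≤ m) ∧
    ∃ β0 : ℝ, ∀ β : ℝ, β0 ≤ β →
      ∀ w : List (V0 × Dir), IsEPath E0 dir s t w →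
        (∀ w', IsEPath E0 dir s t w' → ecost pos β w ≤ ecost pos β w') →
        (steps w).countP (fun q => decide (q.1.1 = q.2.1)) =
          sInf {n : ℕ | ∃ p, IsPhysPath E0 s t p ∧ elbows dir p = n} := by
  constructor
  · intro m w hne hch hh hl hcount
    obtain ⟨p, ⟨h1, h2, h3, h4, _⟩, h6⟩ := phys_from_walk dir w hne hch hh hl
    exact ⟨p, h1, h2, h3, h4, le_trans h6 hcount⟩
  · obtain ⟨p0, hp0⟩ := hconn
    have hSne : {n : ℕ | ∃ p, IsPhysPath E0 s t p ∧ elbows dir p = n}.Nonempty :=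
      ⟨elbows dir p0, p0, hp0, rfl⟩
    obtain ⟨pm, hpm, hpmN⟩ := Nat.sInf_mem hSne
    obtain ⟨hwE, hwcount⟩ := lift_spec dir hirr hpm
    refine ⟨ecost pos 0 (lift dir pm) + 1, ?_⟩
    intro β hβ w hw hmin
    have hge : sInf {n : ℕ | ∃ p, IsPhysPath E0 s t p ∧ elbows dir p = n}
        ≤ (steps w).countP (fun q => decide (q.1.1 = q.2.1)) := by
      obtain ⟨p, hp, hle⟩ := phys_from_walk dir w hw.1 hw.2.1 hw.2.2.2.1 hw.2.2.2.2.1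
      exact le_trans (Nat.sInf_le ⟨p, hp, rfl⟩) hle
    have hle : (steps w).countP (fun q => decide (q.1.1 = q.2.1))
        ≤ sInf {n : ℕ | ∃ p, IsPhysPath E0 s t p ∧ elbows dir p = n} := by
      by_contra hcon
      push_neg at hcon
      have hc1 : ((sInf {n : ℕ | ∃ p, IsPhysPath E0 s t p ∧ elbows dir p = n} : ℕ) : ℝ) + 1
          ≤ ((steps w).countP (fun q => decide (q.1.1 = q.2.1)) : ℝ) := by
        exact_mod_cast hcon
      have e1 := ecost_split pos β w
      have e2 := ecost_split pos β (lift dir pm)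
      have e3 := hmin (lift dir pm) hwE
      rw [hwcount, hpmN] at e2
      have h0w : 0 ≤ ecost pos 0 w := ecost_zero_nonneg pos w
      have h0w0 : 0 ≤ ecost pos 0 (lift dir pm) := ecost_zero_nonneg pos (lift dir pm)
      have hβ0 : (0:ℝ) ≤ β := by linarith
      nlinarith [mul_le_mul_of_nonneg_left hc1 hβ0]
    omega
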